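/- arXiv:0809.2116 — 4 statements merged into one kernel-verified Lean document; each statement's English description precedes it below -/
import Mathlib

section
/- Suppose g(z,w) = Σ_{α+β≥k} c_{α,β} z^α w^β and h(z,w) = Σ_{α+β≥k} d_{α,β} z^α w^β are formal power series with no terms of total degree < k, and they satisfy g_z + h_w − g·h − z·g·h_z − w·h·g_w − z·w·g_w·h_z + z·w·g_z·h_w = 0. Then for all α ≥ 1, β ≥ 1 with k ≤ α+β−1 ≤ 2k, one has d_{α−1,β} = −(α/β)·c_{α,β−1}. -/
open MvPowerSeries

/-- The formal power series `Σ c α β z^α w^β` in two variables. -/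
noncomputable def mkPS (c : ℕ → ℕ → ℂ) : MvPowerSeries (Fin 2) ℂ :=
  fun m => c (m 0) (m 1)

/-- Formal partial derivative of a two-variable power series in the first variable. -/
noncomputable def Dz (S : MvPowerSeries (Fin 2) ℂ) : MvPowerSeries (Fin 2) ℂ :=
  fun m => ((m 0 : ℂ) + 1) * MvPowerSeries.coeff (m + Finsupp.single 0 1) S

/-- Formal partial derivative of a two-variable power series in the second variable. -/
noncomputable def Dw (S : MvPowerSeries (Fin 2) ℂ) : MvPowerSeries (Fin 2) ℂ :=
  fun m => ((m 1 : ℂ) + 1) * MvPowerSeries.coeff (m + Finsupp.single 1 1) S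

lemma coeff_mkPS (c : ℕ → ℕ → ℂ) (n : Fin 2 →₀ ℕ) :
    MvPowerSeries.coeff n (mkPS c) = c (n 0) (n 1) := rfl

lemma coeff_Dz (S : MvPowerSeries (Fin 2) ℂ) (n : Fin 2 →₀ ℕ) :
    MvPowerSeries.coeff n (Dz S)
      = ((n 0 : ℂ) + 1) * MvPowerSeries.coeff (n + Finsupp.single 0 1) S := rfl

lemma coeff_Dw (S : MvPowerSeries (Fin 2) ℂ) (n : Fin 2 →₀ ℕ) :
    MvPowerSeries.coeff n (Dw S)
      = ((n 1 : ℂ) + 1) * MvPowerSeries.coeff (n + Finsupp.single 1 1) S := rfl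

lemma mul_lowdeg (φ ψ : MvPowerSeries (Fin 2) ℂ) (a b : ℕ)
    (hφ : ∀ n : Fin 2 →₀ ℕ, n 0 + n 1 < a → MvPowerSeries.coeff n φ = 0)
    (hψ : ∀ n : Fin 2 →₀ ℕ, n 0 + n 1 < b → MvPowerSeries.coeff n ψ = 0) :
    ∀ n : Fin 2 →₀ ℕ, n 0 + n 1 < a + b → MvPowerSeries.coeff n (φ * ψ) = 0 := by
  intro n hn
  rw [MvPowerSeries.coeff_mul]
  apply Finset.sum_eq_zero
  rintro ⟨p, q⟩ hpq
  rw [Finset.HasAntidiagonal.mem_antidiagonal] at hpq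
  have h0 : p 0 + q 0 = n 0 := by rw [← hpq]; simp
  have h1 : p 1 + q 1 = n 1 := by rw [← hpq]; simp
  by_cases h : p 0 + p 1 < a
  · simp [hφ p h]
  · have : q 0 + q 1 < b := by omega
    simp [hψ q this]

lemma X_lowdeg (s : Fin 2) :
    ∀ n : Fin 2 →₀ ℕ, n 0 + n 1 < 1 → MvPowerSeries.coeff n (X s : MvPowerSeries (Fin 2) ℂ) = 0 := by
  intro n hn
  have h0 : n = 0 := by
    ext i
    fin_cases i
    · show n 0 = 0; omega
    · show n 1 = 0; omega
  subst h0
  simp [MvPowerSeries.coeff_zero_eq_constantCoeff]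

/-- If the formal power series `g = Σ_{α+β≥k} c_{α,β} z^α w^β` and
`h = Σ_{α+β≥k} d_{α,β} z^α w^β` satisfy the PDE
`g_z + h_w − gh − z g h_z − w h g_w − zw g_w h_z + zw g_z h_w = 0`, then
`d_{α−1,β} = −(α/β) c_{α,β−1}` for all `α, β ≥ 1` with `k ≤ α+β−1 ≤ 2k`. -/
theorem pde_coefficient_relations
    (k : ℕ) (c d : ℕ → ℕ → ℂ)
    (hc : ∀ α β : ℕ, α + β < k → c α β = 0)
    (hd : ∀ α β : ℕ, α + β < k → d α β = 0)
    (hpde :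
      Dz (mkPS c) + Dw (mkPS d) - mkPS c * mkPS d
        - X 0 * mkPS c * Dz (mkPS d) - X 1 * mkPS d * Dw (mkPS c)
        - X 0 * X 1 * Dw (mkPS c) * Dz (mkPS d)
        + X 0 * X 1 * Dz (mkPS c) * Dw (mkPS d) = 0) :
    ∀ α β : ℕ, 1 ≤ α → 1 ≤ β → k ≤ α + β - 1 → α + β - 1 ≤ 2 * k →
      d (α - 1) β = -((α : ℂ) / (β : ℂ)) * c α (β - 1) := by
  intro α β hα hβ hk1 hk2
  have hk : 1 ≤ k := by omega
  -- low degree facts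
  have hg : ∀ n : Fin 2 →₀ ℕ, n 0 + n 1 < k → MvPowerSeries.coeff n (mkPS c) = 0 := by
    intro n hn; rw [coeff_mkPS]; exact hc _ _ hn
  have hh : ∀ n : Fin 2 →₀ ℕ, n 0 + n 1 < k → MvPowerSeries.coeff n (mkPS d) = 0 := by
    intro n hn; rw [coeff_mkPS]; exact hd _ _ hn
  have hgz : ∀ n : Fin 2 →₀ ℕ, n 0 + n 1 < k - 1 → MvPowerSeries.coeff n (Dz (mkPS c)) = 0 := by
    intro n hn; rw [coeff_Dz, coeff_mkPS]
    have e0 : ((n + Finsupp.single 0 1 : Fin 2 →₀ ℕ)) 0 = n 0 + 1 := by simp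
    have e1 : ((n + Finsupp.single 0 1 : Fin 2 →₀ ℕ)) 1 = n 1 := by simp
    rw [e0, e1, hc _ _ (by omega), mul_zero]
  have hhz : ∀ n : Fin 2 →₀ ℕ, n 0 + n 1 < k - 1 → MvPowerSeries.coeff n (Dz (mkPS d)) = 0 := by
    intro n hn; rw [coeff_Dz, coeff_mkPS]
    have e0 : ((n + Finsupp.single 0 1 : Fin 2 →₀ ℕ)) 0 = n 0 + 1 := by simp
    have e1 : ((n + Finsupp.single 0 1 : Fin 2 →₀ ℕ)) 1 = n 1 := by simp
    rw [e0, e1, hd _ _ (by omega), mul_zero]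
  have hgw : ∀ n : Fin 2 →₀ ℕ, n 0 + n 1 < k - 1 → MvPowerSeries.coeff n (Dw (mkPS c)) = 0 := by
    intro n hn; rw [coeff_Dw, coeff_mkPS]
    have e0 : ((n + Finsupp.single 1 1 : Fin 2 →₀ ℕ)) 0 = n 0 := by simp
    have e1 : ((n + Finsupp.single 1 1 : Fin 2 →₀ ℕ)) 1 = n 1 + 1 := by simp
    rw [e0, e1, hc _ _ (by omega), mul_zero]
  have hhw : ∀ n : Fin 2 →₀ ℕ, n 0 + n 1 < k - 1 → MvPowerSeries.coeff n (Dw (mkPS d)) = 0 := by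
    intro n hn; rw [coeff_Dw, coeff_mkPS]
    have e0 : ((n + Finsupp.single 1 1 : Fin 2 →₀ ℕ)) 0 = n 0 := by simp
    have e1 : ((n + Finsupp.single 1 1 : Fin 2 →₀ ℕ)) 1 = n 1 + 1 := by simp
    rw [e0, e1, hd _ _ (by omega), mul_zero]
  -- the monomial
  set m : Fin 2 →₀ ℕ := Finsupp.single 0 (α - 1) + Finsupp.single 1 (β - 1) with hm
  have hm0 : m 0 = α - 1 := by simp [hm]
  have hm1 : m 1 = β - 1 := by simp [hm]
  have hdeg : m 0 + m 1 < 2 * k := by omega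
  have key := congrArg (MvPowerSeries.coeff m) hpde
  rw [map_zero, map_add, map_sub, map_sub, map_sub, map_sub, map_add] at key
  -- kill nonlinear terms
  have t1 : MvPowerSeries.coeff m (mkPS c * mkPS d) = 0 :=
    mul_lowdeg _ _ k k hg hh m (by omega)
  have t2 : MvPowerSeries.coeff m (X 0 * mkPS c * Dz (mkPS d)) = 0 :=
    mul_lowdeg _ _ (1 + k) (k - 1) (mul_lowdeg _ _ 1 k (X_lowdeg 0) hg) hhz m (by omega)
  have t3 : MvPowerSeries.coeff m (X 1 * mkPS d * Dw (mkPS c)) = 0 :=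
    mul_lowdeg _ _ (1 + k) (k - 1) (mul_lowdeg _ _ 1 k (X_lowdeg 1) hh) hgw m (by omega)
  have t4 : MvPowerSeries.coeff m (X 0 * X 1 * Dw (mkPS c) * Dz (mkPS d)) = 0 :=
    mul_lowdeg _ _ (1 + 1 + (k - 1)) (k - 1)
      (mul_lowdeg _ _ (1 + 1) (k - 1) (mul_lowdeg _ _ 1 1 (X_lowdeg 0) (X_lowdeg 1)) hgw)
      hhz m (by omega)
  have t5 : MvPowerSeries.coeff m (X 0 * X 1 * Dz (mkPS c) * Dw (mkPS d)) = 0 :=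
    mul_lowdeg _ _ (1 + 1 + (k - 1)) (k - 1)
      (mul_lowdeg _ _ (1 + 1) (k - 1) (mul_lowdeg _ _ 1 1 (X_lowdeg 0) (X_lowdeg 1)) hgz)
      hhw m (by omega)
  rw [t1, t2, t3, t4, t5] at key
  -- compute linear terms
  have e10 : ((m + Finsupp.single 0 1 : Fin 2 →₀ ℕ)) 0 = α := by simp [hm0]; omega
  have e11 : ((m + Finsupp.single 0 1 : Fin 2 →₀ ℕ)) 1 = β - 1 := by simp [hm1]
  have e20 : ((m + Finsupp.single 1 1 : Fin 2 →₀ ℕ)) 0 = α - 1 := by simp [hm0]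
  have e21 : ((m + Finsupp.single 1 1 : Fin 2 →₀ ℕ)) 1 = β := by simp [hm1]; omega
  rw [coeff_Dz, coeff_Dw, coeff_mkPS, coeff_mkPS, e10, e11, e20, e21, hm0, hm1] at key
  have cα : ((α - 1 : ℕ) : ℂ) + 1 = (α : ℂ) := by
    have : ((α - 1 : ℕ) : ℂ) = (α : ℂ) - 1 := by
      push_cast [Nat.cast_sub hα]; ring
    rw [this]; ring
  have cβ : ((β - 1 : ℕ) : ℂ) + 1 = (β : ℂ) := by
    have : ((β - 1 : ℕ) : ℂ) = (β : ℂ) - 1 := by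
      push_cast [Nat.cast_sub hβ]; ring
    rw [this]; ring
  rw [cα, cβ] at key
  have hβ0 : (β : ℂ) ≠ 0 := Nat.cast_ne_zero.mpr (by omega)
  field_simp
  linear_combination key
end

section
/- Suppose the coefficients satisfy the relations d_{k−β,β} = −((k−β+1)/β)·c_{k−β+1,β−1} for 1 ≤ β ≤ k. Let r(u) = Q_{k+2}(1,u) − u·P_{k+2}(1,u) with P_{k+2}(z,w) = Σ_{α+β=k} c_{α,β} z^{α+1} w^{β+1}, Q_{k+2}(z,w) = Σ_{α+β=k} d_{α,β} z^{α+1} w^{β+1}. Then for every θ ∈ ℂ with θ ≠ 0, r(θ) = 0 and P_{k+2}(1,θ) ≠ 0, one has r'(θ)/P_{k+2}(1,θ) = −(k+1). -/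
/-- If the coefficients satisfy `d_{k−β,β} = −((k−β+1)/β) c_{k−β+1,β−1}` for
`1 ≤ β ≤ k`, and `r(u) = Q_{k+2}(1,u) − u P_{k+2}(1,u)`, then every `θ ≠ 0` with `r(θ) = 0`
and `P_{k+2}(1,θ) ≠ 0` satisfies `r'(θ)/P_{k+2}(1,θ) = −(k+1)`. -/
theorem hakim_invariant_eq_neg
    (k : ℕ) (c d : ℕ → ℕ → ℂ)
    (hrel : ∀ β : ℕ, 1 ≤ β → β ≤ k →
      d (k - β) β = -(((k : ℂ) - β + 1) / (β : ℂ)) * c (k - β + 1) (β - 1))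
    (P Q : ℂ → ℂ → ℂ) (r : ℂ → ℂ)
    (hP : ∀ z w : ℂ, P z w = ∑ α ∈ Finset.range (k + 1),
      c α (k - α) * z ^ (α + 1) * w ^ (k - α + 1))
    (hQ : ∀ z w : ℂ, Q z w = ∑ α ∈ Finset.range (k + 1),
      d α (k - α) * z ^ (α + 1) * w ^ (k - α + 1))
    (hr : ∀ u : ℂ, r u = Q 1 u - u * P 1 u)
    (θ : ℂ) (hθ : θ ≠ 0) (hrθ : r θ = 0) (hPθ : P 1 θ ≠ 0) :
    deriv r θ / P 1 θ = -((k : ℂ) + 1) := by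
  -- notation
  set B : ℂ := ∑ α ∈ Finset.range (k + 1), c α (k - α) * θ ^ (k - α + 1) with hB
  set A : ℂ := ∑ α ∈ Finset.range (k + 1), d α (k - α) * θ ^ (k - α + 1) with hA
  -- r as an explicit function
  have hrF : r = fun u : ℂ =>
      (∑ α ∈ Finset.range (k + 1), d α (k - α) * u ^ (k - α + 1))
      - u * ∑ α ∈ Finset.range (k + 1), c α (k - α) * u ^ (k - α + 1) := by
    funext u
    rw [hr, hQ, hP]
    simp [one_pow, mul_one]
  have hPB : P 1 θ = B := by rw [hP]; simp [hB]
  have hBne : B ≠ 0 := hPB ▸ hPθ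
  have hAθ : A - θ * B = 0 := by
    have := hrθ
    rw [hrF] at this
    simpa [hA, hB] using this
  -- derivative
  have hdc : HasDerivAt (fun u : ℂ => ∑ α ∈ Finset.range (k + 1), c α (k - α) * u ^ (k - α + 1))
      (∑ α ∈ Finset.range (k + 1), c α (k - α) * (((k - α + 1 : ℕ) : ℂ) * θ ^ (k - α))) θ := by
    apply HasDerivAt.fun_sum
    intro α _
    simpa using ((hasDerivAt_pow (k - α + 1) θ).const_mul (c α (k - α)))
  have hdd : HasDerivAt (fun u : ℂ => ∑ α ∈ Finset.range (k + 1), d α (k - α) * u ^ (k - α + 1))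
      (∑ α ∈ Finset.range (k + 1), d α (k - α) * (((k - α + 1 : ℕ) : ℂ) * θ ^ (k - α))) θ := by
    apply HasDerivAt.fun_sum
    intro α _
    simpa using ((hasDerivAt_pow (k - α + 1) θ).const_mul (d α (k - α)))
  have hder : HasDerivAt r
      ((∑ α ∈ Finset.range (k + 1), d α (k - α) * (((k - α + 1 : ℕ) : ℂ) * θ ^ (k - α)))
        - (1 * B + θ * ∑ α ∈ Finset.range (k + 1),
            c α (k - α) * (((k - α + 1 : ℕ) : ℂ) * θ ^ (k - α)))) θ := by
    rw [hrF]
    exact hdd.sub ((hasDerivAt_id θ).mul hdc)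
  set Dd : ℂ := ∑ α ∈ Finset.range (k + 1), d α (k - α) * (((k - α + 1 : ℕ) : ℂ) * θ ^ (k - α)) with hDd
  set Dc : ℂ := ∑ α ∈ Finset.range (k + 1), c α (k - α) * (((k - α + 1 : ℕ) : ℂ) * θ ^ (k - α)) with hDc
  set S1 : ℂ := ∑ α ∈ Finset.range (k + 1), ((k : ℂ) - α) * d α (k - α) * θ ^ (k - α + 1) with hS1
  set S2 : ℂ := ∑ α ∈ Finset.range (k + 1), (α : ℂ) * c α (k - α) * θ ^ (k - α + 2) with hS2
  set B2 : ℂ := ∑ α ∈ Finset.range (k + 1), c α (k - α) * θ ^ (k - α + 2) with hB2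
  -- sum identities
  have L1 : θ * Dd = S1 + A := by
    rw [hDd, hS1, hA, Finset.mul_sum, ← Finset.sum_add_distrib]
    apply Finset.sum_congr rfl
    intro α hα
    have hk : α ≤ k := Nat.lt_succ_iff.mp (Finset.mem_range.mp hα)
    have hc : ((k - α + 1 : ℕ) : ℂ) = (k : ℂ) - α + 1 := by
      push_cast [Nat.cast_sub hk]; ring
    rw [hc, pow_succ]
    ring
  have L2 : θ * (θ * Dc) = ((k : ℂ) + 1) * B2 - S2 := by
    rw [hDc, hS2, hB2, Finset.mul_sum, Finset.mul_sum, Finset.mul_sum, ← Finset.sum_sub_distrib]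
    apply Finset.sum_congr rfl
    intro α hα
    have hk : α ≤ k := Nat.lt_succ_iff.mp (Finset.mem_range.mp hα)
    have hc : ((k - α + 1 : ℕ) : ℂ) = (k : ℂ) - α + 1 := by
      push_cast [Nat.cast_sub hk]; ring
    have he : k - α + 2 = (k - α) + 1 + 1 := by omega
    rw [hc, he, pow_succ, pow_succ]
    ring
  have L3 : θ * B = B2 := by
    rw [hB, hB2, Finset.mul_sum]
    apply Finset.sum_congr rfl
    intro α hα
    have he : k - α + 2 = (k - α + 1) + 1 := by omega
    rw [he, pow_succ]
    ring
  have keysum : S1 + S2 = 0 := by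
    rw [hS1, hS2, Finset.sum_range_succ, Finset.sum_range_succ']
    have e1 : ((k : ℂ) - (k : ℕ)) * d k (k - k) * θ ^ (k - k + 1) = 0 := by simp
    have e2 : ((0 : ℕ) : ℂ) * c 0 (k - 0) * θ ^ (k - 0 + 2) = 0 := by simp
    rw [e1, e2, add_zero, add_zero, ← Finset.sum_add_distrib]
    apply Finset.sum_eq_zero
    intro α hα
    have hαk : α < k := Finset.mem_range.mp hα
    have hd := hrel (k - α) (by omega) (by omega)
    have i1 : k - (k - α) = α := by omega
    have i3 : k - α - 1 = k - (α + 1) := by omega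
    rw [i1, i3] at hd
    have hcast : ((k - α : ℕ) : ℂ) = (k : ℂ) - α := by
      push_cast [Nat.cast_sub hαk.le]; ring
    rw [hcast] at hd
    have hne : (k : ℂ) - (α : ℂ) ≠ 0 := by
      have : (α : ℂ) ≠ (k : ℂ) := by exact_mod_cast hαk.ne
      exact sub_ne_zero_of_ne (Ne.symm this)
    have he : k - (α + 1) + 2 = k - α + 1 := by omega
    rw [he, hd]
    have hcast2 : ((α + 1 : ℕ) : ℂ) = (α : ℂ) + 1 := by push_cast; ring
    rw [hcast2]
    field_simp
    ring
  -- conclude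
  have hD : deriv r θ = Dd - (1 * B + θ * Dc) := hder.deriv
  rw [hD, hPB, div_eq_iff hBne]
  apply mul_left_cancel₀ hθ
  have hAB : A = θ * B := sub_eq_zero.mp hAθ
  linear_combination L1 - L2 + keysum + hAB + ((k : ℂ) + 1) * L3
end

section
/- Let F(z,w) = (z·e^{w·g(z,w)}, w·e^{z·h(z,w)}) with g, h entire on ℂ², and suppose its Jacobian determinant is e^{w·g(z,w)+z·h(z,w)}. Then at every fixed point (z₀,w₀) of F the Jacobian determinant equals 1; consequently F has no attracting fixed point. -/
open Complex

/-- Partial derivative in the first variable. -/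
noncomputable def pz (f : ℂ × ℂ → ℂ) (p : ℂ × ℂ) : ℂ :=
  deriv (fun z => f (z, p.2)) p.1

/-- Partial derivative in the second variable. -/
noncomputable def pw (f : ℂ × ℂ → ℂ) (p : ℂ × ℂ) : ℂ :=
  deriv (fun w => f (p.1, w)) p.2

lemma hasEigenvalue_of_apply {T : (ℂ × ℂ) →ₗ[ℂ] (ℂ × ℂ)} {r : ℂ} {v : ℂ × ℂ}
    (hv : v ≠ 0) (h : T v = r • v) : Module.End.HasEigenvalue T r :=
  Module.End.hasEigenvalue_of_hasEigenvector ⟨Module.End.mem_eigenspace_iff.mpr h, hv⟩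

lemma exists_big_eigenvalue (T : (ℂ × ℂ) →ₗ[ℂ] (ℂ × ℂ))
    (hdet : (T (1,0)).1 * (T (0,1)).2 - (T (0,1)).1 * (T (1,0)).2 = 1) :
    ∃ μ : ℂ, Module.End.HasEigenvalue T μ ∧ 1 ≤ ‖μ‖ := by
  set a := (T (1,0)).1 with ha
  set b := (T (0,1)).1 with hb
  set c := (T (1,0)).2 with hc
  set d := (T (0,1)).2 with hd
  have hT : ∀ x y : ℂ, T (x, y) = (a*x + b*y, c*x + d*y) := by
    intro x y
    have hxy : (x, y) = x • ((1:ℂ),(0:ℂ)) + y • ((0:ℂ),(1:ℂ)) := by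
      simp [Prod.ext_iff]
    rw [hxy, map_add, map_smul, map_smul]
    simp [Prod.ext_iff, ha, hb, hc, hd]; constructor <;> ring
  obtain ⟨s, hs⟩ := IsAlgClosed.exists_pow_nat_eq ((a+d)^2 - 4) (n := 2) (by norm_num)
  have hprod : ((a+d)+s)/2 * (((a+d)-s)/2) = 1 := by
    linear_combination (-1/4 : ℂ) * hs
  have hroot : ∀ r : ℂ, (r = ((a+d)+s)/2 ∨ r = ((a+d)-s)/2) → (a - r) * (d - r) = b * c := by
    rintro r (rfl | rfl)
    · linear_combination (1/4 : ℂ) * hs + hdet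
    · linear_combination (1/4 : ℂ) * hs + hdet
  have hbig : ∃ r : ℂ, (r = ((a+d)+s)/2 ∨ r = ((a+d)-s)/2) ∧ 1 ≤ ‖r‖ := by
    by_cases h1 : 1 ≤ ‖((a+d)+s)/2‖
    · exact ⟨_, Or.inl rfl, h1⟩
    · refine ⟨_, Or.inr rfl, ?_⟩
      have h2 : ‖((a+d)+s)/2‖ * ‖((a+d)-s)/2‖ = 1 := by
        rw [← norm_mul, hprod, norm_one]
      nlinarith [norm_nonneg (((a+d)+s)/2), norm_nonneg (((a+d)-s)/2)]
  obtain ⟨r, hr, hrbig⟩ := hbig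
  have hq := hroot r hr
  refine ⟨r, ?_, hrbig⟩
  by_cases hba : b = 0 ∧ r = a
  · by_cases hcd : c = 0 ∧ r = d
    · refine hasEigenvalue_of_apply (v := (1,0)) (by simp [Prod.ext_iff]) ?_
      rw [hT, Prod.smul_mk]
      simp [hba.2, hcd.1]
    · refine hasEigenvalue_of_apply (v := (r - d, c)) ?_ ?_
      · simp only [Ne, Prod.ext_iff, not_and_or] at hcd ⊢
        rcases hcd with h' | h'
        · exact Or.inr h'
        · exact Or.inl (sub_ne_zero.mpr h')
      · rw [hT, Prod.smul_mk, Prod.ext_iff]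
        constructor
        · simp only [smul_eq_mul]; linear_combination -hq
        · simp only [smul_eq_mul]; ring
  · refine hasEigenvalue_of_apply (v := (b, r - a)) ?_ ?_
    · simp only [Ne, Prod.ext_iff, not_and_or] at hba ⊢
      rcases hba with h' | h'
      · exact Or.inl h'
      · exact Or.inr (sub_ne_zero.mpr h')
    · rw [hT, Prod.smul_mk, Prod.ext_iff]
      constructor
      · simp only [smul_eq_mul]; ring
      · simp only [smul_eq_mul]; linear_combination -hq

lemma fderiv_basis1 (F : ℂ × ℂ → ℂ × ℂ) (p : ℂ × ℂ) (hFd : DifferentiableAt ℂ F p) :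
    fderiv ℂ F p (1, 0) = (pz (fun q => (F q).1) p, pz (fun q => (F q).2) p) := by
  have hcurve : HasDerivAt (fun z : ℂ => (z, p.2)) ((1:ℂ), (0:ℂ)) p.1 :=
    (hasDerivAt_id p.1).prodMk (hasDerivAt_const p.1 p.2)
  have hcomp : HasDerivAt (fun z : ℂ => F (z, p.2)) (fderiv ℂ F p (1, 0)) p.1 := by
    have hp : HasFDerivAt F (fderiv ℂ F p) (p.1, p.2) := by
      simpa using hFd.hasFDerivAt
    exact hp.comp_hasDerivAt p.1 hcurve
  have h1 : HasDerivAt (fun z : ℂ => (F (z, p.2)).1) (fderiv ℂ F p (1, 0)).1 p.1 :=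
    ((ContinuousLinearMap.fst ℂ ℂ ℂ).hasFDerivAt).comp_hasDerivAt p.1 hcomp
  have h2 : HasDerivAt (fun z : ℂ => (F (z, p.2)).2) (fderiv ℂ F p (1, 0)).2 p.1 :=
    ((ContinuousLinearMap.snd ℂ ℂ ℂ).hasFDerivAt).comp_hasDerivAt p.1 hcomp
  rw [Prod.ext_iff]
  exact ⟨(h1.deriv).symm, (h2.deriv).symm⟩

lemma fderiv_basis2 (F : ℂ × ℂ → ℂ × ℂ) (p : ℂ × ℂ) (hFd : DifferentiableAt ℂ F p) :
    fderiv ℂ F p (0, 1) = (pw (fun q => (F q).1) p, pw (fun q => (F q).2) p) := by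
  have hcurve : HasDerivAt (fun w : ℂ => (p.1, w)) ((0:ℂ), (1:ℂ)) p.2 :=
    (hasDerivAt_const p.2 p.1).prodMk (hasDerivAt_id p.2)
  have hcomp : HasDerivAt (fun w : ℂ => F (p.1, w)) (fderiv ℂ F p (0, 1)) p.2 := by
    have hp : HasFDerivAt F (fderiv ℂ F p) (p.1, p.2) := by
      simpa using hFd.hasFDerivAt
    exact hp.comp_hasDerivAt p.2 hcurve
  have h1 : HasDerivAt (fun w : ℂ => (F (p.1, w)).1) (fderiv ℂ F p (0, 1)).1 p.2 :=
    ((ContinuousLinearMap.fst ℂ ℂ ℂ).hasFDerivAt).comp_hasDerivAt p.2 hcomp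
  have h2 : HasDerivAt (fun w : ℂ => (F (p.1, w)).2) (fderiv ℂ F p (0, 1)).2 p.2 :=
    ((ContinuousLinearMap.snd ℂ ℂ ℂ).hasFDerivAt).comp_hasDerivAt p.2 hcomp
  rw [Prod.ext_iff]
  exact ⟨(h1.deriv).symm, (h2.deriv).symm⟩

/-- If `F(z,w) = (z e^{w g}, w e^{z h})` with `g, h` entire has Jacobian
determinant `e^{w g + z h}`, then the Jacobian determinant equals 1 at every fixed point
off the axes, and `F` has no attracting fixed point at all. -/
theorem no_attracting_fixed_point_of_exp_jacobian
    (g h : ℂ × ℂ → ℂ) (hg : Differentiable ℂ g) (hh : Differentiable ℂ h)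
    (F : ℂ × ℂ → ℂ × ℂ)
    (hF : ∀ p : ℂ × ℂ, F p = (p.1 * exp (p.2 * g p), p.2 * exp (p.1 * h p)))
    (hjac : ∀ p : ℂ × ℂ,
      pz (fun q => (F q).1) p * pw (fun q => (F q).2) p
        - pw (fun q => (F q).1) p * pz (fun q => (F q).2) p
      = exp (p.2 * g p + p.1 * h p)) :
    (∀ p : ℂ × ℂ, F p = p → p.1 ≠ 0 → p.2 ≠ 0 →
      pz (fun q => (F q).1) p * pw (fun q => (F q).2) p
        - pw (fun q => (F q).1) p * pz (fun q => (F q).2) p = 1) ∧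
    ¬ ∃ p : ℂ × ℂ, F p = p ∧
      ∀ μ : ℂ, Module.End.HasEigenvalue ((fderiv ℂ F p).toLinearMap) μ → ‖μ‖ < 1 := by
  have hFd : Differentiable ℂ F := by
    have hFe : F = fun q : ℂ × ℂ => (q.1 * exp (q.2 * g q), q.2 * exp (q.1 * h q)) :=
      funext hF
    rw [hFe]
    exact (differentiable_fst.mul ((differentiable_snd.mul hg).cexp)).prodMk
      (differentiable_snd.mul ((differentiable_fst.mul hh).cexp))
  have part1 : ∀ p : ℂ × ℂ, F p = p → p.1 ≠ 0 → p.2 ≠ 0 →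
      pz (fun q => (F q).1) p * pw (fun q => (F q).2) p
        - pw (fun q => (F q).1) p * pz (fun q => (F q).2) p = 1 := by
    intro p hp h1 h2
    have hfx := (hF p).symm.trans hp
    rw [Prod.ext_iff] at hfx
    have e1 : exp (p.2 * g p) = 1 := by
      rcases mul_right_eq_self₀.mp hfx.1 with h' | h'
      · exact h'
      · exact absurd h' h1
    have e2 : exp (p.1 * h p) = 1 := by
      rcases mul_right_eq_self₀.mp hfx.2 with h' | h'
      · exact h'
      · exact absurd h' h2
    rw [hjac p, exp_add, e1, e2, mul_one]
  refine ⟨part1, ?_⟩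
  rintro ⟨p, hp, hsmall⟩
  by_cases h1 : p.1 = 0
  · have hb2 := fderiv_basis2 F p (hFd p)
    have hpw1 : pw (fun q => (F q).1) p = 0 := by
      unfold pw
      have he : (fun w => (F (p.1, w)).1) = fun _ : ℂ => (0:ℂ) := by
        funext w; simp [hF, h1]
      rw [he]; simp
    have hpw2 : pw (fun q => (F q).2) p = 1 := by
      unfold pw
      have he : (fun w => (F (p.1, w)).2) = fun w : ℂ => w := by
        funext w; simp [hF, h1]
      rw [he]; simp
    have heig : Module.End.HasEigenvalue ((fderiv ℂ F p).toLinearMap) 1 := by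
      apply hasEigenvalue_of_apply (v := ((0:ℂ),(1:ℂ))) (by simp [Prod.ext_iff])
      show fderiv ℂ F p (0,1) = (1:ℂ) • (((0:ℂ),(1:ℂ)) : ℂ × ℂ)
      rw [hb2, hpw1, hpw2]; simp
    have := hsmall 1 heig
    simp at this
  · by_cases h2 : p.2 = 0
    · have hb1 := fderiv_basis1 F p (hFd p)
      have hpz1 : pz (fun q => (F q).1) p = 1 := by
        unfold pz
        have he : (fun z => (F (z, p.2)).1) = fun z : ℂ => z := by
          funext z; simp [hF, h2]
        rw [he]; simp
      have hpz2 : pz (fun q => (F q).2) p = 0 := by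
        unfold pz
        have he : (fun z => (F (z, p.2)).2) = fun _ : ℂ => (0:ℂ) := by
          funext z; simp [hF, h2]
        rw [he]; simp
      have heig : Module.End.HasEigenvalue ((fderiv ℂ F p).toLinearMap) 1 := by
        apply hasEigenvalue_of_apply (v := ((1:ℂ),(0:ℂ))) (by simp [Prod.ext_iff])
        show fderiv ℂ F p (1,0) = (1:ℂ) • (((1:ℂ),(0:ℂ)) : ℂ × ℂ)
        rw [hb1, hpz1, hpz2]; simp
      have := hsmall 1 heig
      simp at this
    · have hdet := part1 p hp h1 h2
      have hdet' : (((fderiv ℂ F p).toLinearMap) (1,0)).1 * (((fderiv ℂ F p).toLinearMap) (0,1)).2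
          - (((fderiv ℂ F p).toLinearMap) (0,1)).1 * (((fderiv ℂ F p).toLinearMap) (1,0)).2 = 1 := by
        simp only [ContinuousLinearMap.coe_coe]
        rw [fderiv_basis1 F p (hFd p), fderiv_basis2 F p (hFd p)]
        exact hdet
      obtain ⟨μ, hμ, hμ1⟩ := exists_big_eigenvalue (fderiv ℂ F p).toLinearMap hdet'
      exact absurd (hsmall μ hμ) (not_lt.mpr hμ1)
end

section
/- Let g(z,w) = Σ_{α+β≥k} c_{α,β} z^α w^β and h(z,w) = Σ_{α+β≥k} d_{α,β} z^α w^β be formal power series of order ≥ k satisfying d_{k−β,β} = −((k−β+1)/β)·c_{k−β+1,β−1} for 1 ≤ β ≤ k, with not all degree-k coefficients of g zero. Define P(z,w) = Σ_{α+β=k} c_{α,β} z^{α+1}w^{β+1} and Q(z,w) = Σ_{α+β=k} d_{α,β} z^{α+1}w^{β+1}. Then every non-degenerate characteristic direction v = (1,θ), θ ≠ 0, of (P,Q) has Hakim invariant A(v) = r'(θ)/P(1,θ) = −(k+1); in particular Re A(v) = −(k+1) < 0. -/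
/-- If the degree-`k` coefficients of `g, h` (of order ≥ k, with `g`'s degree-`k`
part nonzero) satisfy the relations `d_{k−β,β} = −((k−β+1)/β) c_{k−β+1,β−1}` forced by
preservation of `dz∧dw/(zw)`, then every non-degenerate characteristic direction `(1,θ)`,
`θ ≠ 0`, of `(P,Q)` (with `P = Σ_{α+β=k} c_{α,β} z^{α+1} w^{β+1}`,
`Q = Σ_{α+β=k} d_{α,β} z^{α+1} w^{β+1}`) has Hakim invariant
`A(v) = r'(θ)/P(1,θ) = −(k+1)`; in particular `Re A(v) < 0`. -/
theorem hakim_invariants_all_negative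
    (k : ℕ) (c d : ℕ → ℕ → ℂ)
    (hc : ∀ α β : ℕ, α + β < k → c α β = 0)
    (hd : ∀ α β : ℕ, α + β < k → d α β = 0)
    (hrel : ∀ β : ℕ, 1 ≤ β → β ≤ k →
      d (k - β) β = -(((k : ℂ) - β + 1) / (β : ℂ)) * c (k - β + 1) (β - 1))
    (hnz : ∃ α : ℕ, α ≤ k ∧ c α (k - α) ≠ 0)
    (P Q : ℂ → ℂ → ℂ) (r : ℂ → ℂ)
    (hP : ∀ z w : ℂ, P z w = ∑ α ∈ Finset.range (k + 1),
      c α (k - α) * z ^ (α + 1) * w ^ (k - α + 1))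
    (hQ : ∀ z w : ℂ, Q z w = ∑ α ∈ Finset.range (k + 1),
      d α (k - α) * z ^ (α + 1) * w ^ (k - α + 1))
    (hr : ∀ u : ℂ, r u = Q 1 u - u * P 1 u) :
    ∀ θ : ℂ, θ ≠ 0 → r θ = 0 → P 1 θ ≠ 0 →
      deriv r θ / P 1 θ = -((k : ℂ) + 1) ∧ (deriv r θ / P 1 θ).re < 0 := by
  intro θ hθ hrθ hPθ
  set A : ℕ → ℂ := fun α => (((k:ℂ)+1)/(((k-α:ℕ):ℂ)+1)) * c α (k-α) with hA
  -- the closed form of r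
  have key : ∀ u : ℂ, r u =
      d k 0 * u - ∑ α ∈ Finset.range (k+1), A α * u ^ (k-α+2) := by
    intro u
    have hQ1 : Q 1 u = d k 0 * u + ∑ j ∈ Finset.range (k+1),
        -(((j:ℕ):ℂ)/(((k-j:ℕ):ℂ)+1)) * c j (k-j) * u ^ (k-j+2) := by
      have h0 : ∀ α ∈ Finset.range k,
          d α (k-α) * (1:ℂ) ^ (α+1) * u ^ (k-α+1)
            = -(((α+1:ℕ):ℂ)/(((k-(α+1):ℕ):ℂ)+1)) * c (α+1) (k-(α+1)) * u ^ (k-(α+1)+2) := by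
        intro α hα
        simp only [Finset.mem_range] at hα
        have h1 : (1:ℕ) ≤ k - α := by omega
        have h2 : k - α ≤ k := by omega
        have hdrel := hrel (k-α) h1 h2
        have e1 : k - (k - α) = α := by omega
        have e2 : k - α - 1 = k - (α+1) := by omega
        have e3 : k - α + 1 = k - (α+1) + 2 := by omega
        have e4 : ((k - α : ℕ) : ℂ) = (k:ℂ) - α := by
          push_cast [Nat.cast_sub (le_of_lt hα)]; ring
        have e7 : ((k - (α+1) : ℕ) : ℂ) + 1 = (k:ℂ) - α := by
          push_cast [Nat.cast_sub (by omega : α + 1 ≤ k)]; ring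
        rw [e1, e2] at hdrel
        rw [hdrel, e3, e4, e7]
        push_cast
        ring
      rw [hQ, Finset.sum_range_succ, Finset.sum_congr rfl h0,
        Finset.sum_range_succ'
          (fun j : ℕ => -(((j:ℕ):ℂ)/(((k-j:ℕ):ℂ)+1)) * c j (k-j) * u ^ (k-j+2)) k]
      simp [Nat.sub_self]
      ring
    have hP1 : u * P 1 u = ∑ α ∈ Finset.range (k+1), c α (k-α) * u ^ (k-α+2) := by
      rw [hP, Finset.mul_sum]
      refine Finset.sum_congr rfl ?_
      intro α _
      simp only [one_pow, one_mul]
      ring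
    have hcomb : (∑ j ∈ Finset.range (k+1),
          -(((j:ℕ):ℂ)/(((k-j:ℕ):ℂ)+1)) * c j (k-j) * u ^ (k-j+2))
        - (∑ α ∈ Finset.range (k+1), c α (k-α) * u ^ (k-α+2))
        = ∑ α ∈ Finset.range (k+1), -(A α * u ^ (k-α+2)) := by
      rw [← Finset.sum_sub_distrib]
      refine Finset.sum_congr rfl ?_
      intro α hα
      simp only [Finset.mem_range] at hα
      have e4 : ((k - α : ℕ) : ℂ) = (k:ℂ) - α := by
        push_cast [Nat.cast_sub (by omega : α ≤ k)]; ring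
      have hne : (k:ℂ) - α + 1 ≠ 0 := by
        rw [← e4]
        have : (((k - α + 1 : ℕ)) : ℂ) ≠ 0 := Nat.cast_ne_zero.2 (by omega)
        push_cast at this
        exact this
      simp only [hA, e4]
      field_simp
      ring
    rw [hr, hQ1, hP1]
    have := Finset.sum_neg_distrib
      (f := fun α => A α * u ^ (k-α+2)) (s := Finset.range (k+1))
    rw [this] at hcomb
    linear_combination hcomb
  -- derivative
  have hF : HasDerivAt r
      (d k 0 - ∑ α ∈ Finset.range (k+1), A α * (((k-α+2:ℕ):ℂ) * θ ^ (k-α+1))) θ := by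
    have hre : r = fun u => d k 0 * u - ∑ α ∈ Finset.range (k+1), A α * u ^ (k-α+2) :=
      funext key
    rw [hre]
    have h1 : HasDerivAt (fun u : ℂ => d k 0 * u) (d k 0) θ := by
      simpa using (hasDerivAt_id θ).const_mul (d k 0)
    have h2 : HasDerivAt (fun u : ℂ => ∑ α ∈ Finset.range (k+1), A α * u ^ (k-α+2))
        (∑ α ∈ Finset.range (k+1), A α * (((k-α+2:ℕ):ℂ) * θ ^ (k-α+1))) θ := by
      apply HasDerivAt.fun_sum
      intro α _
      simpa using ((hasDerivAt_pow (k-α+2) θ).const_mul (A α))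
    exact h1.sub h2
  have hd0 : d k 0 = ∑ α ∈ Finset.range (k+1), A α * θ ^ (k-α+1) := by
    have h := key θ
    rw [hrθ] at h
    have h' : d k 0 * θ = ∑ α ∈ Finset.range (k+1), A α * θ ^ (k-α+2) := by
      linear_combination -h
    have h'' : d k 0 * θ = (∑ α ∈ Finset.range (k+1), A α * θ ^ (k-α+1)) * θ := by
      rw [h', Finset.sum_mul]
      refine Finset.sum_congr rfl ?_
      intro α _
      rw [pow_succ]
      ring
    exact mul_right_cancel₀ hθ h''
  have hderiv : deriv r θ = -((k:ℂ)+1) * P 1 θ := by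
    rw [hF.deriv, hd0, ← Finset.sum_sub_distrib, hP, Finset.mul_sum]
    refine Finset.sum_congr rfl ?_
    intro α hα
    simp only [Finset.mem_range] at hα
    have e4 : ((k - α : ℕ) : ℂ) = (k:ℂ) - α := by
      push_cast [Nat.cast_sub (by omega : α ≤ k)]; ring
    have hne : (k:ℂ) - α + 1 ≠ 0 := by
      rw [← e4]
      have : (((k - α + 1 : ℕ)) : ℂ) ≠ 0 := Nat.cast_ne_zero.2 (by omega)
      push_cast at this
      exact this
    have e6 : ((k - α + 2 : ℕ) : ℂ) = ((k:ℂ) - α) + 2 := by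
      rw [Nat.cast_add, e4]; norm_num
    simp only [hA, e4, e6, one_pow, one_mul]
    field_simp
    ring
  constructor
  · rw [hderiv]
    rw [mul_div_assoc, div_self hPθ, mul_one]
  · rw [hderiv]
    rw [mul_div_assoc, div_self hPθ, mul_one]
    simp only [Complex.neg_re, Complex.add_re, Complex.natCast_re, Complex.one_re]
    have : (0:ℝ) < (k:ℝ) + 1 := by positivity
    linarith
end
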